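/- Let S ⊆ G be contained in a single angle class (i.e., N_R divides β'−β for all (β,τ,f), (β',τ',f') ∈ S). Then for arbitrary signals s_1, …, s_{N_T} ∈ ℂ^{N_t}, the Gram matrix of the corresponding columns of the scaled measurement matrix admits the representation Ã_S^* Ã_S = Σ_{i,j=1}^{N_T} Σ_{a,b=1}^{N_t} conj(s_{(i,a)})·s_{(j,b)}·Y^{(i,a),(j,b)}, where s_{(i,a)} denotes the a-th entry of s_i. -/

import Mathlib

open MeasureTheory ProbabilityTheory Complex
open scoped ENNReal Matrix

noncomputable section

namespace MIMO

/-- Squared ℓ²-norm of a complex vector. -/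
def l2normSq {ι : Type*} [Fintype ι] (x : ι → ℂ) : ℝ := ∑ i, ‖x i‖ ^ 2

/-- ℓ²-norm of a complex vector. -/
def l2norm {ι : Type*} [Fintype ι] (x : ι → ℂ) : ℝ := Real.sqrt (l2normSq x)

/-- ℓ¹-norm of a complex vector. -/
def l1norm {ι : Type*} [Fintype ι] (x : ι → ℂ) : ℝ := ∑ i, ‖x i‖

/-- Hermitian inner product, conjugate-linear in the first argument. -/
def cInner {ι : Type*} [Fintype ι] (x y : ι → ℂ) : ℂ := ∑ i, (starRingEnd ℂ) (x i) * y i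

/-- Spectral norm (ℓ² → ℓ² operator norm) of a complex matrix. -/
def specNorm {m n : Type*} [Fintype m] [Fintype n] (A : Matrix m n ℂ) : ℝ :=
  sSup ((fun x => l2norm (A.mulVec x)) '' {x | l2norm x ≤ 1})

/-- Frobenius norm of a complex matrix. -/
def frobNorm {m n : Type*} [Fintype m] [Fintype n] (A : Matrix m n ℂ) : ℝ :=
  Real.sqrt (∑ i, ∑ j, ‖A i j‖ ^ 2)

/-- The standard complex Gaussian measure on ℂ: real and imaginary parts are
independent real centered Gaussians of variance 1/2. -/
def stdCGaussian : Measure ℂ :=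
  Measure.map (⇑Complex.measurableEquivRealProd.symm)
    ((gaussianReal 0 (1/2)).prod (gaussianReal 0 (1/2)))

/-- A mean-zero complex Gaussian measure of variance σ² on ℂ. -/
def cGaussian (σ : ℝ) : Measure ℂ :=
  Measure.map (fun z : ℂ => (σ : ℂ) * z) stdCGaussian

/-- Complex Gaussian noise (independent entries, variance σ²). -/
def noiseMeasure (ι : Type*) [Fintype ι] (σ : ℝ) : Measure (ι → ℂ) :=
  Measure.pi (fun _ => cGaussian σ)

/-- The Steinhaus (uniform) distribution on the complex unit circle. -/
def steinhaus : Measure ℂ :=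
  Measure.map (fun θ : ℝ => Complex.exp (θ * Complex.I))
    ((ENNReal.ofReal (2 * Real.pi))⁻¹ • volume.restrict (Set.Ico (0:ℝ) (2 * Real.pi)))

/-- A Steinhaus vector: independent entries uniform on the complex unit circle. -/
def steinhausPi (ι : Type*) [Fintype ι] : Measure (ι → ℂ) := Measure.pi (fun _ => steinhaus)

/-- The joint distribution of the NT independent standard complex Gaussian signals in ℂ^{Nt}. -/
def signalMeasure (NT Nt : ℕ) : Measure (Fin NT → Fin Nt → ℂ) :=
  Measure.pi (fun _ => Measure.pi (fun _ => stdCGaussian))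

/-- The angle–delay–Doppler parameter grid `[N_T N_R] × [N_t] × [N_t]`. -/
abbrev Grid (NT NR Nt : ℕ) := Fin (NT * NR) × Fin Nt × Fin Nt

/-- `e^{2πi x}`. -/
def ePhase (x : ℝ) : ℂ := Complex.exp (((2 * Real.pi * x : ℝ) : ℂ) * Complex.I)

open Fin.NatCast in
/-- The modulated circulant shift `M_f T_τ` applied to a signal:
`(M_f T_τ s)_k = e^{2πi f (k-1)/N_t} s_{k-τ}` (1-based indices; `k.val = k-1`). -/
def modShift (Nt : ℕ) [NeZero Nt] (τ f : ℕ) (s : Fin Nt → ℂ) (k : Fin Nt) : ℂ :=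
  ePhase ((f : ℝ) * (k.1 : ℝ) / (Nt : ℝ)) * s (k - (τ : Fin Nt))

/-- The column `A_Θ` of the MIMO measurement matrix, `Θ = (β,τ,f)`;
its `j`-th length-`N_t` block is
`e^{2πi β (j-1)/N_R} ∑_i e^{2πi β (i-1)/(N_T N_R)} M_f T_τ s_i`. -/
def colA (NT NR Nt : ℕ) [NeZero Nt] (sg : Fin NT → Fin Nt → ℂ)
    (Θ : Grid NT NR Nt) (p : Fin NR × Fin Nt) : ℂ :=
  ePhase (((Θ.1.1 : ℝ) + 1) * (p.1.1 : ℝ) / (NR : ℝ)) *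
    ∑ i : Fin NT, ePhase (((Θ.1.1 : ℝ) + 1) * (i.1 : ℝ) / ((NT : ℝ) * (NR : ℝ))) *
      modShift Nt (Θ.2.1.1 + 1) (Θ.2.2.1 + 1) (sg i) p.2

/-- The column `Ã_Θ = (N_T N_R N_t)^{-1/2} A_Θ` of the scaled measurement matrix. -/
def colAt (NT NR Nt : ℕ) [NeZero Nt] (sg : Fin NT → Fin Nt → ℂ)
    (Θ : Grid NT NR Nt) (p : Fin NR × Fin Nt) : ℂ :=
  ((Real.sqrt ((NT : ℝ) * (NR : ℝ) * (Nt : ℝ)) : ℂ))⁻¹ * colA NT NR Nt sg Θ p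

/-- The MIMO measurement matrix `A`. -/
def Amat (NT NR Nt : ℕ) [NeZero Nt] (sg : Fin NT → Fin Nt → ℂ) :
    Matrix (Fin NR × Fin Nt) (Grid NT NR Nt) ℂ := fun p Θ => colA NT NR Nt sg Θ p

/-- The scaled MIMO measurement matrix `Ã = (N_T N_R N_t)^{-1/2} A`. -/
def Atil (NT NR Nt : ℕ) [NeZero Nt] (sg : Fin NT → Fin Nt → ℂ) :
    Matrix (Fin NR × Fin Nt) (Grid NT NR Nt) ℂ := fun p Θ => colAt NT NR Nt sg Θ p

/-- The Gram matrix `Ã_T^* Ã_T` of the columns of `Ã` indexed by a subset `T`. -/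
def gram (NT NR Nt : ℕ) [NeZero Nt] (sg : Fin NT → Fin Nt → ℂ)
    (T : Finset (Grid NT NR Nt)) : Matrix {Θ // Θ ∈ T} {Θ // Θ ∈ T} ℂ :=
  fun Θ Θ' => cInner (colAt NT NR Nt sg Θ.1) (colAt NT NR Nt sg Θ'.1)

/-- `S_{[β]}`: the elements of `S` whose angle parameter is equivalent to `β`
(equivalent ⟺ difference divisible by `N_R`). -/
def classOf (NT NR Nt : ℕ) (S : Finset (Grid NT NR Nt)) (β : Fin (NT * NR)) :
    Finset (Grid NT NR Nt) :=
  S.filter (fun Θ => ((Θ.1.1 : ℤ) - (β.1 : ℤ)) % (NR : ℤ) = 0)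

/-- A support set `S` is `η`-balanced if `|S_{[β]}| ≤ η |S| / N_R` for every angle class. -/
def IsBalanced (NT NR Nt : ℕ) (S : Finset (Grid NT NR Nt)) (η : ℝ) : Prop :=
  ∀ β : Fin (NT * NR), ((classOf NT NR Nt S β).card : ℝ) ≤ η * (S.card : ℝ) / (NR : ℝ)

/-- The restricted isometry constant `δ_s(A)`: the smallest `δ ≥ 0` such that
`(1-δ)‖x‖₂² ≤ ‖Ax‖₂² ≤ (1+δ)‖x‖₂²` for all `s`-sparse `x`. -/
def ripConst {m n : Type*} [Fintype m] [Fintype n] (s : ℕ) (A : Matrix m n ℂ) : ℝ :=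
  sInf {δ : ℝ | 0 ≤ δ ∧ ∀ x : n → ℂ, (Function.support x).ncard ≤ s →
    (1 - δ) * l2normSq x ≤ l2normSq (A.mulVec x) ∧
      l2normSq (A.mulVec x) ≤ (1 + δ) * l2normSq x}


/-- The matrix `Y^{(i,a),(j,b)}` indexed by a set `S` within a single angle class:
`[Y^{(i,a),(j,b)}]_{Θ,Θ'} = δ^{~N_t}_{a-b,τ'-τ} (N_T N_t)⁻¹
  e^{2πi (f'-f)(τ+a-1)/N_t} e^{2πi (β'(j-1)-β(i-1))/(N_T N_R)}` (1-based parameters). -/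
def Ymat (NT NR Nt : ℕ) (S : Finset (Grid NT NR Nt))
    (i : Fin NT) (a : Fin Nt) (j : Fin NT) (b : Fin Nt) :
    Matrix {Θ // Θ ∈ S} {Θ // Θ ∈ S} ℂ :=
  fun Θ Θ' =>
    (if (((a.1 : ℤ) - (b.1 : ℤ)) - ((Θ'.1.2.1.1 : ℤ) - (Θ.1.2.1.1 : ℤ))) % (Nt : ℤ) = 0
      then 1 else 0) *
    (((NT : ℂ) * (Nt : ℂ)))⁻¹ *
    ePhase (((Θ'.1.2.2.1 : ℝ) - (Θ.1.2.2.1 : ℝ)) * ((Θ.1.2.1.1 : ℝ) + (a.1 : ℝ) + 1) / (Nt : ℝ)) *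
    ePhase ((((Θ'.1.1.1 : ℝ) + 1) * (j.1 : ℝ) - ((Θ.1.1.1 : ℝ) + 1) * (i.1 : ℝ)) /
      ((NT : ℝ) * (NR : ℝ)))


lemma ePhase_add (x y : ℝ) : ePhase (x + y) = ePhase x * ePhase y := by
  unfold ePhase; rw [← Complex.exp_add]; congr 1; push_cast; ring

lemma ePhase_intCast (n : ℤ) : ePhase (n : ℝ) = 1 := by
  unfold ePhase
  have h : ((2 * Real.pi * ((n:ℤ):ℝ) : ℝ) : ℂ) * Complex.I = (n : ℂ) * (2 * Real.pi * Complex.I) := by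
    push_cast; ring
  rw [h, Complex.exp_int_mul_two_pi_mul_I]

lemma ePhase_eq_of_sub_int {x y : ℝ} (n : ℤ) (h : x - y = n) : ePhase x = ePhase y := by
  have hx : x = y + (n:ℝ) := by linarith
  rw [hx, ePhase_add, ePhase_intCast, mul_one]

lemma conj_ePhase (x : ℝ) : (starRingEnd ℂ) (ePhase x) = ePhase (-x) := by
  unfold ePhase
  rw [← Complex.exp_conj, map_mul, Complex.conj_ofReal, Complex.conj_I]
  congr 1
  push_cast; ring

lemma fin_delta {n : ℕ} [NeZero n] (a b τ τ' : Fin n) :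
    ((((a.1:ℤ) - (b.1:ℤ)) - ((τ'.1:ℤ) - (τ.1:ℤ))) % (n:ℤ) = 0) ↔ b = a + τ - τ' := by
  cases n with
  | zero => exact absurd rfl (NeZero.ne 0)
  | succ m =>
    rw [EuclideanDomain.mod_eq_zero]
    rw [← ZMod.intCast_zmod_eq_zero_iff_dvd]
    push_cast
    have hc : ∀ x : Fin (m+1), ((x.1 : ℕ) : ZMod (m+1)) = x := fun x => ZMod.natCast_zmod_val (n := m+1) x
    rw [hc, hc, hc, hc]
    change (a - b - (τ' - τ) : Fin (m+1)) = 0 ↔ b = a + τ - τ'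
    constructor
    · intro h; open Fin.CommRing in linear_combination -h
    · intro h; rw [h]; open Fin.CommRing in ring

open Fin.NatCast in
/-- chaos representation of the Gram matrix for a set in one angle class
(equation (3.14) of the paper). -/
theorem stmt16 (NT NR Nt : ℕ) [NeZero NT] [NeZero NR] [NeZero Nt]
    (sg : Fin NT → Fin Nt → ℂ) (S : Finset (Grid NT NR Nt))
    (hclass : ∀ Θ ∈ S, ∀ Θ' ∈ S, ((Θ'.1.1 : ℤ) - (Θ.1.1 : ℤ)) % (NR : ℤ) = 0) :
    gram NT NR Nt sg S =
      ∑ i : Fin NT, ∑ j : Fin NT, ∑ a : Fin Nt, ∑ b : Fin Nt,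
        ((starRingEnd ℂ) (sg i a) * sg j b) • Ymat NT NR Nt S i a j b := by
  ext Θs Θs'
  obtain ⟨⟨β, τ, f⟩, hΘ⟩ := Θs
  obtain ⟨⟨β', τ', f'⟩, hΘ'⟩ := Θs'
  simp only [gram, cInner, colAt, colA, modShift, Matrix.sum_apply, Matrix.smul_apply, Ymat,
    smul_eq_mul]
  have hNt0 : (Nt:ℝ) ≠ 0 := Nat.cast_ne_zero.mpr (NeZero.ne Nt)
  have hNR0 : (NR:ℝ) ≠ 0 := Nat.cast_ne_zero.mpr (NeZero.ne NR)
  have hNT0 : (NT:ℝ) ≠ 0 := Nat.cast_ne_zero.mpr (NeZero.ne NT)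
  have hNtc : (Nt:ℂ) ≠ 0 := Nat.cast_ne_zero.mpr (NeZero.ne Nt)
  have hNRc : (NR:ℂ) ≠ 0 := Nat.cast_ne_zero.mpr (NeZero.ne NR)
  have hNTc : (NT:ℂ) ≠ 0 := Nat.cast_ne_zero.mpr (NeZero.ne NT)
  obtain ⟨mβ, hmβ⟩ := EuclideanDomain.mod_eq_zero.1 (hclass _ hΘ _ hΘ')
  have hsq : ((Real.sqrt ((NT : ℝ) * (NR : ℝ) * (Nt : ℝ)) : ℂ))⁻¹ *
      ((Real.sqrt ((NT : ℝ) * (NR : ℝ) * (Nt : ℝ)) : ℂ))⁻¹ =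
      ((((NT : ℝ) * (NR : ℝ) * (Nt : ℝ) : ℝ)) : ℂ)⁻¹ := by
    rw [← mul_inv, ← Complex.ofReal_mul, Real.mul_self_sqrt (by positivity)]
  have hrk : ∀ (r : Fin NR) (X Y : ℂ),
      (starRingEnd ℂ) (((Real.sqrt ((NT : ℝ) * (NR : ℝ) * (Nt : ℝ)) : ℂ))⁻¹ *
          (ePhase (((β.1:ℝ)+1) * (r.1:ℝ) / (NR:ℝ)) * X)) *
        (((Real.sqrt ((NT : ℝ) * (NR : ℝ) * (Nt : ℝ)) : ℂ))⁻¹ *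
          (ePhase (((β'.1:ℝ)+1) * (r.1:ℝ) / (NR:ℝ)) * Y)) =
      ((((NT : ℝ) * (NR : ℝ) * (Nt : ℝ) : ℝ)) : ℂ)⁻¹ * ((starRingEnd ℂ) X * Y) := by
    intro r X Y
    have hph : ePhase (-(((β.1:ℝ)+1) * (r.1:ℝ) / (NR:ℝ)) + ((β'.1:ℝ)+1) * (r.1:ℝ) / (NR:ℝ)) = 1 := by
      have h0 : (-(((β.1:ℝ)+1) * (r.1:ℝ) / (NR:ℝ)) + ((β'.1:ℝ)+1) * (r.1:ℝ) / (NR:ℝ)) - ((0:ℤ):ℝ)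
          = ((mβ * (r.1:ℤ) : ℤ) : ℝ) := by
        have hc : (β'.1:ℝ) - (β.1:ℝ) = (NR:ℝ) * (mβ:ℝ) := by exact_mod_cast hmβ
        have hβ2 : (β'.1:ℝ) = (β.1:ℝ) + (NR:ℝ) * (mβ:ℝ) := by linarith
        push_cast
        rw [hβ2]
        field_simp
        ring
      rw [ePhase_eq_of_sub_int _ h0, ePhase_intCast]
    rw [map_mul, map_mul, map_inv₀, Complex.conj_ofReal, conj_ePhase]
    have hre : ∀ c p q U V : ℂ, (c * (p * U)) * (c * (q * V)) = (c*c) * ((p*q) * (U*V)) := by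
      intros; ring
    rw [hre, ← ePhase_add, hph, one_mul, hsq]
  rw [Fintype.sum_prod_type]
  simp only [hrk]
  rw [Finset.sum_const, Finset.card_univ, Fintype.card_fin, nsmul_eq_mul]
  simp only [map_sum, Finset.mul_sum, Finset.sum_mul]
  conv_lhs => enter [2, k]; rw [Finset.sum_comm]
  conv_lhs => rw [Finset.sum_comm]
  refine Finset.sum_congr rfl fun i _ => ?_
  conv_lhs => rw [Finset.sum_comm]
  refine Finset.sum_congr rfl fun j _ => ?_
  rw [← Equiv.sum_comp (Equiv.addRight ((τ.1 + 1 : ℕ) : Fin Nt))]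
  simp only [Equiv.coe_addRight]
  refine Finset.sum_congr rfl fun a _ => ?_
  -- simplify shifted indices
  have e1 : ((τ.1 + 1 : ℕ) : Fin Nt) = τ + 1 := by push_cast [Fin.cast_val_eq_self]; open Fin.CommRing in ring
  have e2 : ((τ'.1 + 1 : ℕ) : Fin Nt) = τ' + 1 := by push_cast [Fin.cast_val_eq_self]; open Fin.CommRing in ring
  have htF2 : a + ((τ.1 + 1 : ℕ) : Fin Nt) - ((τ'.1 + 1 : ℕ) : Fin Nt) = a + τ - τ' := by
    rw [e1, e2]; open Fin.CommRing in ring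
  rw [add_sub_cancel_right, htF2]
  -- collapse the b-sum on the RHS
  simp only [fin_delta, mul_ite, ite_mul, one_mul, zero_mul, mul_zero, mul_one]
  rw [Finset.sum_ite_eq']
  simp only [Finset.mem_univ, if_pos]
  -- expand conjugates on the LHS
  simp only [map_mul, conj_ePhase]
  -- phase combination facts
  have hB : ePhase (-(((β.1:ℝ)+1) * (i.1:ℝ) / ((NT:ℝ)*(NR:ℝ)))) *
      ePhase (((β'.1:ℝ)+1) * (j.1:ℝ) / ((NT:ℝ)*(NR:ℝ))) =
      ePhase ((((β'.1:ℝ)+1) * (j.1:ℝ) - ((β.1:ℝ)+1) * (i.1:ℝ)) / ((NT:ℝ)*(NR:ℝ))) := by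
    rw [← ePhase_add]; congr 1; ring
  have hmod : (a + ((τ.1 + 1 : ℕ) : Fin Nt)).1 ≡ a.1 + (τ.1 + 1) [MOD Nt] := by
    rw [Fin.val_add, Fin.val_natCast]
    exact (Nat.mod_modEq _ _).trans (Nat.ModEq.add_left _ (Nat.mod_modEq _ _))
  obtain ⟨mk, hmk⟩ := hmod.dvd
  have hk : (((a + ((τ.1 + 1 : ℕ) : Fin Nt)).1 : ℕ) : ℝ) =
      (a.1:ℝ) + (τ.1:ℝ) + 1 - (Nt:ℝ) * (mk:ℝ) := by
    have hmkR : ((a.1 + (τ.1 + 1) : ℕ) : ℝ) - (((a + ((τ.1 + 1 : ℕ) : Fin Nt)).1 : ℕ) : ℝ)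
        = (Nt:ℝ) * (mk:ℝ) := by exact_mod_cast hmk
    push_cast at hmkR ⊢
    linarith
  have hF : ePhase (-(((f.1 + 1 : ℕ):ℝ) * (((a + ((τ.1 + 1 : ℕ) : Fin Nt)).1 : ℕ):ℝ) / (Nt:ℝ))) *
      ePhase (((f'.1 + 1 : ℕ):ℝ) * (((a + ((τ.1 + 1 : ℕ) : Fin Nt)).1 : ℕ):ℝ) / (Nt:ℝ)) =
      ePhase (((f'.1:ℝ) - (f.1:ℝ)) * ((τ.1:ℝ) + (a.1:ℝ) + 1) / (Nt:ℝ)) := by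
    rw [← ePhase_add]
    refine ePhase_eq_of_sub_int (((f.1:ℤ) - (f'.1:ℤ)) * mk) ?_
    rw [hk]
    push_cast
    field_simp
    ring
  have hC : (NR:ℂ) * ((((NT : ℝ) * (NR : ℝ) * (Nt : ℝ) : ℝ)) : ℂ)⁻¹ = ((NT:ℂ) * (Nt:ℂ))⁻¹ := by
    push_cast
    field_simp
  rw [← hB, ← hF, ← hC]
  ring


end MIMO
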